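/- Let g : ℝ → ℝ be non-decreasing. Then the limit as h → ∞ of liminf_{t→∞} (g(t+h) − g(t))/h exists and equals sup_{h>0} liminf_{t→∞} (g(t+h) − g(t))/h. -/

import Mathlib

open Filter

private lemma key_real (g : ℝ → ℝ) (hg : Monotone g) {h0 a' T : ℝ} (h0pos : 0 < h0)
    (ha' : 0 ≤ a') (hT : ∀ t, T ≤ t → a' * h0 ≤ g (t + h0) - g t) :
    ∀ t, T ≤ t → ∀ h, 0 ≤ h → (h - h0) * a' ≤ g (t + h) - g t := by
  intro t ht h hh
  set n := ⌊h / h0⌋₊ with hn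
  have hn1 : (n : ℝ) * h0 ≤ h := by
    rw [← le_div_iff₀ h0pos]
    exact Nat.floor_le (div_nonneg hh h0pos.le)
  have hn2 : h < ((n : ℝ) + 1) * h0 := by
    rw [← div_lt_iff₀ h0pos]
    exact Nat.lt_floor_add_one _
  have tele : g (t + n * h0) - g t = ∑ k ∈ Finset.range n,
      (g (t + ((k : ℝ) + 1) * h0) - g (t + (k : ℝ) * h0)) := by
    have := Finset.sum_range_sub (fun k : ℕ => g (t + (k : ℝ) * h0)) n
    simp only [Nat.cast_add, Nat.cast_one] at this ⊢
    push_cast at this ⊢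
    rw [this]
    simp
  have hsum : (n : ℝ) * (a' * h0) ≤ g (t + n * h0) - g t := by
    rw [tele]
    calc (n : ℝ) * (a' * h0) = ∑ _k ∈ Finset.range n, a' * h0 := by
          simp [mul_comm]
      _ ≤ _ := by
          apply Finset.sum_le_sum
          intro k hk
          have htk : T ≤ t + (k : ℝ) * h0 := by
            have : (0:ℝ) ≤ (k : ℝ) * h0 := by positivity
            linarith
          have := hT _ htk
          have e : t + (k : ℝ) * h0 + h0 = t + ((k : ℝ) + 1) * h0 := by ring
          rw [e] at this
          exact this
  have hmono : g (t + n * h0) ≤ g (t + h) := hg (by linarith)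
  have : (h - h0) * a' ≤ (n : ℝ) * h0 * a' := by
    apply mul_le_mul_of_nonneg_right _ ha'
    linarith
  calc (h - h0) * a' ≤ (n : ℝ) * h0 * a' := this
    _ = (n : ℝ) * (a' * h0) := by ring
    _ ≤ g (t + n * h0) - g t := hsum
    _ ≤ g (t + h) - g t := by linarith

theorem stmt_5 (g : ℝ → ℝ) (hg : Monotone g) :
    Filter.Tendsto
      (fun h : ℝ => Filter.liminf (fun t : ℝ => (((g (t + h) - g t) / h : ℝ) : EReal)) Filter.atTop)
      Filter.atTop
      (nhds (⨆ h : {h : ℝ // 0 < h},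
        Filter.liminf (fun t : ℝ => (((g (t + h.1) - g t) / h.1 : ℝ) : EReal)) Filter.atTop)) := by
  set L : ℝ → EReal := fun h : ℝ =>
    Filter.liminf (fun t : ℝ => (((g (t + h) - g t) / h : ℝ) : EReal)) Filter.atTop with hL
  set S : EReal := ⨆ h : {h : ℝ // 0 < h}, L h.1 with hS
  -- nonnegativity of L for positive h
  have hLnonneg : ∀ h : ℝ, 0 < h → (0 : EReal) ≤ L h := by
    intro h hpos
    apply Filter.le_liminf_of_le (by isBoundedDefault)
    apply Eventually.of_forall
    intro t
    have : (0:ℝ) ≤ (g (t + h) - g t) / h :=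
      div_nonneg (by have := hg (le_add_of_nonneg_right hpos.le : t ≤ t + h); linarith) hpos.le
    exact_mod_cast this
  rw [tendsto_order]
  constructor
  · intro a ha
    rw [hS, lt_iSup_iff] at ha
    obtain ⟨⟨h0, h0pos⟩, ha⟩ := ha
    rcases lt_or_ge a 0 with hneg | hpos
    · filter_upwards [eventually_gt_atTop (0:ℝ)] with h hh
      exact lt_of_lt_of_le hneg (hLnonneg h hh)
    · -- a is a real number
      have haTop : a ≠ ⊤ := ne_top_of_lt ha
      have haBot : a ≠ ⊥ := by
        intro hb; rw [hb] at hpos; exact absurd hpos (by simp)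
      lift a to ℝ using ⟨haTop, haBot⟩ with ar
      obtain ⟨b, hb1, hb2⟩ := exists_between ha
      have hbTop : b ≠ ⊤ := ne_top_of_lt hb2
      have hbBot : b ≠ ⊥ := by
        intro hb; rw [hb] at hb1; exact absurd hb1 (by simp)
      lift b to ℝ using ⟨hbTop, hbBot⟩ with a'
      have har : ar < a' := by exact_mod_cast hb1
      have ha'pos : 0 ≤ a' := by
        have : (0:EReal) ≤ (ar : EReal) := hpos
        have : (0:ℝ) ≤ ar := by exact_mod_cast this
        linarith
      -- eventually g(t+h0) - g t > a' * h0
      have hev : ∀ᶠ t in atTop, a' * h0 ≤ g (t + h0) - g t := by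
        have := Filter.eventually_lt_of_lt_liminf hb2 (by isBoundedDefault)
        filter_upwards [this] with t ht
        have : a' < (g (t + h0) - g t) / h0 := by exact_mod_cast ht
        rw [lt_div_iff₀ h0pos] at this
        linarith [this]
      obtain ⟨T, hT⟩ := eventually_atTop.1 hev
      have hkey := key_real g hg h0pos ha'pos hT
      -- (h - h0) * a' / h → a' > ar
      have htend : Filter.Tendsto (fun h : ℝ => (h - h0) * a' / h) atTop (nhds a') := by
        have : Filter.Tendsto (fun h : ℝ => a' - h0 * a' / h) atTop (nhds (a' - 0)) := by
          apply Filter.Tendsto.const_sub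
          exact Tendsto.div_atTop tendsto_const_nhds tendsto_id
        rw [sub_zero] at this
        apply this.congr'
        filter_upwards [eventually_gt_atTop (0:ℝ)] with h hh
        field_simp
      have hev2 : ∀ᶠ h : ℝ in atTop, ar < (h - h0) * a' / h :=
        htend.eventually_const_lt har
      filter_upwards [hev2, eventually_gt_atTop (0:ℝ)] with h hh hhpos
      have hLlow : (((h - h0) * a' / h : ℝ) : EReal) ≤ L h := by
        apply Filter.le_liminf_of_le (by isBoundedDefault)
        filter_upwards [eventually_ge_atTop T] with t ht
        have h1 := hkey t ht h hhpos.le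
        have h2 : (h - h0) * a' / h ≤ (g (t + h) - g t) / h :=
          div_le_div_of_nonneg_right h1 hhpos.le
        exact_mod_cast h2
      calc (ar : EReal) < (((h - h0) * a' / h : ℝ) : EReal) := by exact_mod_cast hh
        _ ≤ L h := hLlow
  · intro b hb
    filter_upwards [eventually_gt_atTop (0:ℝ)] with h hh
    have : L h ≤ S := le_iSup (fun p : {h : ℝ // 0 < h} => L p.1) ⟨h, hh⟩
    exact lt_of_le_of_lt this hb
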